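/- (Proposition 5, core optimisation claim) Let M and Σ₀ be symmetric positive definite with square roots satisfying M^{⊤/2} M^{1/2} = M, and let Φ_m ∈ ℝ^{d×m} be a matrix whose columns are orthonormal eigenvectors of M^{1/2} Σ₀ M^{⊤/2} corresponding to its m largest eigenvalues (Φ_mᵀ Φ_m = I_m). Then the search-direction matrix S_m = A^{-⊤} M^{⊤/2} Φ_m minimises tr(M^{1/2} Σ_m(S) M^{⊤/2}) over all matrices S ∈ ℝ^{d×m} with linearly independent columns, where Σ_m(S) = Σ₀ − Σ₀ Aᵀ S (Sᵀ A Σ₀ Aᵀ S)⁻¹ Sᵀ A Σ₀. -/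

import Mathlib

open Matrix

namespace OptInfoAux

variable {d m : ℕ}

/-- For a symmetric idempotent `N`, the quadratic form is `‖N x‖²`. -/
lemma quad_proj (N : Matrix (Fin d) (Fin d) ℝ) (hNt : Nᵀ = N) (hNN : N * N = N)
    (c : Fin d → ℝ) : c ⬝ᵥ (N *ᵥ c) = (N *ᵥ c) ⬝ᵥ (N *ᵥ c) := by
  conv_lhs => rw [← hNN]
  rw [← Matrix.mulVec_mulVec, Matrix.dotProduct_mulVec, ← Matrix.mulVec_transpose, hNt]

lemma quad_proj_nonneg (N : Matrix (Fin d) (Fin d) ℝ) (hNt : Nᵀ = N) (hNN : N * N = N)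
    (c : Fin d → ℝ) : 0 ≤ c ⬝ᵥ (N *ᵥ c) := by
  rw [quad_proj N hNt hNN c]
  exact Finset.sum_nonneg fun i _ => mul_self_nonneg _

lemma trace_psd_nonneg {X : Matrix (Fin d) (Fin d) ℝ} (hX : X.PosSemidef) : 0 ≤ X.trace := by
  rw [Matrix.trace]
  refine Finset.sum_nonneg fun i _ => ?_
  have := hX.dotProduct_mulVec_nonneg (Pi.single i 1)
  simpa [Matrix.diag, dotProduct, Matrix.mulVec, Pi.single_apply] using this

lemma trace_mul_psd_nonneg {P X : Matrix (Fin d) (Fin d) ℝ} (hPt : Pᵀ = P) (hPP : P * P = P)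
    (hX : X.PosSemidef) : 0 ≤ (P * X).trace := by
  have h1 : (P * X).trace = (P * X * P).trace := by
    conv_lhs => rw [← hPP]
    rw [Matrix.mul_assoc, Matrix.trace_mul_comm P (P * X), Matrix.mul_assoc]
  rw [h1]
  refine trace_psd_nonneg ?_
  have := hX.mul_mul_conjTranspose_same P
  rwa [Matrix.conjTranspose_eq_transpose_of_trivial, hPt] at this

lemma entry_eq_quad (Φ : Matrix (Fin d) (Fin m) ℝ) (X : Matrix (Fin d) (Fin d) ℝ) (j : Fin m) :
    (Φᵀ * X * Φ) j j = (fun i => Φ i j) ⬝ᵥ (X *ᵥ (fun i => Φ i j)) := by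
  simp only [Matrix.mul_apply, dotProduct, Matrix.mulVec, Matrix.transpose_apply,
    Finset.sum_mul, Finset.mul_sum]
  rw [Finset.sum_comm]
  refine Finset.sum_congr rfl fun k _ => Finset.sum_congr rfl fun i _ => by ring

lemma kyfan (hm0 : 0 < m) (B : Matrix (Fin d) (Fin d) ℝ) (hB : B.PosSemidef)
    (Φ : Matrix (Fin d) (Fin m) ℝ) (hΦ : Φᵀ * Φ = 1) (μ : Fin m → ℝ)
    (hBΦ : B * Φ = Φ * Matrix.diagonal μ)
    (hLead : ∀ v : Fin d → ℝ, (∀ j : Fin m, (fun i => Φ i j) ⬝ᵥ v = 0) →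
      ∀ j : Fin m, v ⬝ᵥ (B *ᵥ v) ≤ μ j * (v ⬝ᵥ v))
    (P : Matrix (Fin d) (Fin d) ℝ) (hPt : Pᵀ = P) (hPP : P * P = P)
    (htr : P.trace = (m : ℝ)) :
    (P * B).trace ≤ ∑ j, μ j := by
  have hBt : Bᵀ = B := by
    have h := hB.1
    rwa [Matrix.IsHermitian, Matrix.conjTranspose_eq_transpose_of_trivial] at h
  obtain ⟨D, hD⟩ : ∃ D : Matrix (Fin m) (Fin m) ℝ, D = Matrix.diagonal μ := ⟨_, rfl⟩
  obtain ⟨Q, hQ⟩ : ∃ Q : Matrix (Fin d) (Fin d) ℝ, Q = Φ * Φᵀ := ⟨_, rfl⟩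
  obtain ⟨Q', hQ'⟩ : ∃ Q' : Matrix (Fin d) (Fin d) ℝ, Q' = 1 - Q := ⟨_, rfl⟩
  rw [← hD] at hBΦ
  have hQt : Qᵀ = Q := by rw [hQ, Matrix.transpose_mul, Matrix.transpose_transpose]
  have hQQ : Q * Q = Q := by
    rw [hQ, Matrix.mul_assoc, ← Matrix.mul_assoc Φᵀ, hΦ, Matrix.one_mul]
  have hQ't : Q'ᵀ = Q' := by rw [hQ', Matrix.transpose_sub, Matrix.transpose_one, hQt]
  have hQ'Q' : Q' * Q' = Q' := by
    rw [hQ']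
    calc (1 - Q) * (1 - Q) = 1 - Q - Q + Q * Q := by noncomm_ring
    _ = 1 - Q := by rw [hQQ]; abel
  have hΦB : Φᵀ * B = D * Φᵀ := by
    have h : (B * Φ)ᵀ = (Φ * D)ᵀ := by rw [hBΦ]
    rwa [Matrix.transpose_mul, Matrix.transpose_mul, hBt, hD, Matrix.diagonal_transpose,
      ← hD] at h
  have hQB : Q * B = Φ * D * Φᵀ := by
    rw [hQ, Matrix.mul_assoc, hΦB, ← Matrix.mul_assoc]
  have hBQ : B * Q = Φ * D * Φᵀ := by
    rw [hQ, ← Matrix.mul_assoc, hBΦ]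
  have hQBQ : Q * B * Q = Φ * D * Φᵀ := by
    rw [hQB, hQ, Matrix.mul_assoc (Φ * D), ← Matrix.mul_assoc Φᵀ, hΦ, Matrix.one_mul]
  have hdecomp : B = Φ * D * Φᵀ + Q' * B * Q' := by
    have hexp : Q' * B * Q' = B - Q * B - B * Q + Q * B * Q := by
      rw [hQ']; noncomm_ring
    rw [hexp, hQBQ, hQB, hBQ]
    abel
  obtain ⟨p, hp⟩ : ∃ p : Fin m → ℝ, p = fun j => (Φᵀ * P * Φ) j j := ⟨_, rfl⟩
  have hpj : ∀ j, p j = (fun i => Φ i j) ⬝ᵥ (P *ᵥ (fun i => Φ i j)) := by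
    intro j; rw [hp]; exact entry_eq_quad Φ P j
  have hcol : ∀ j : Fin m, (fun i => Φ i j) ⬝ᵥ (fun i => Φ i j) = 1 := by
    intro j
    have h := congrFun (congrFun hΦ j) j
    simpa [Matrix.mul_apply, dotProduct, Matrix.one_apply] using h
  have hp0 : ∀ j, 0 ≤ p j := by
    intro j
    rw [hpj]
    exact quad_proj_nonneg P hPt hPP _
  have hp1 : ∀ j, p j ≤ 1 := by
    intro j
    have h1 : (1 - P)ᵀ = 1 - P := by rw [Matrix.transpose_sub, Matrix.transpose_one, hPt]
    have h2 : (1 - P) * (1 - P) = 1 - P := by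
      calc (1 - P) * (1 - P) = 1 - P - P + P * P := by noncomm_ring
      _ = 1 - P := by rw [hPP]; abel
    have h3 := quad_proj_nonneg (1 - P) h1 h2 (fun i => Φ i j)
    rw [Matrix.sub_mulVec, dotProduct_sub, Matrix.one_mulVec, hcol j, ← hpj] at h3
    linarith
  have htrPQ : (P * Q).trace = ∑ j, p j := by
    rw [hQ, ← Matrix.mul_assoc, Matrix.trace_mul_comm (P * Φ) Φᵀ, ← Matrix.mul_assoc, hp]
    simp [Matrix.trace, Matrix.diag]
  have hterm1 : (P * (Φ * D * Φᵀ)).trace = ∑ j, p j * μ j := by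
    have h : P * (Φ * D * Φᵀ) = (P * Φ * D) * Φᵀ := by simp only [Matrix.mul_assoc]
    rw [h, Matrix.trace_mul_comm (P * Φ * D) Φᵀ, ← Matrix.mul_assoc, ← Matrix.mul_assoc, hD, hp]
    simp [Matrix.trace, Matrix.diag, Matrix.mul_diagonal]
  obtain ⟨j0, -, hj0⟩ := Finset.exists_min_image Finset.univ μ ⟨⟨0, hm0⟩, Finset.mem_univ _⟩
  have hQ'c : ∀ j : Fin m, Q' *ᵥ (fun i => Φ i j) = 0 := by
    intro j
    have h1 : Φᵀ *ᵥ (fun i => Φ i j) = fun k => (1 : Matrix (Fin m) (Fin m) ℝ) k j := by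
      funext k
      have h := congrFun (congrFun hΦ k) j
      simpa [Matrix.mul_apply, Matrix.mulVec, dotProduct] using h
    have h2 : Q *ᵥ (fun i => Φ i j) = (fun i => Φ i j) := by
      rw [hQ, ← Matrix.mulVec_mulVec, h1]
      funext i
      simp [Matrix.mulVec, dotProduct, Matrix.one_apply]
    rw [hQ', Matrix.sub_mulVec, Matrix.one_mulVec, h2, sub_self]
  have hXpsd : (μ j0 • Q' - Q' * B * Q').PosSemidef := by
    refine Matrix.PosSemidef.of_dotProduct_mulVec_nonneg ?_ ?_
    · show (μ j0 • Q' - Q' * B * Q')ᴴ = _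
      rw [Matrix.conjTranspose_eq_transpose_of_trivial, Matrix.transpose_sub,
        Matrix.transpose_smul, hQ't, Matrix.transpose_mul, Matrix.transpose_mul, hBt, hQ't,
        Matrix.mul_assoc]
    · intro x
      have hsx : star x = x := by simp
      rw [hsx]
      have horth : ∀ j : Fin m, (fun i => Φ i j) ⬝ᵥ (Q' *ᵥ x) = 0 := by
        intro j
        rw [Matrix.dotProduct_mulVec, ← Matrix.mulVec_transpose, hQ't, hQ'c j,
          zero_dotProduct]
      have hlead := hLead (Q' *ᵥ x) horth j0
      have e1 : x ⬝ᵥ (Q' *ᵥ x) = (Q' *ᵥ x) ⬝ᵥ (Q' *ᵥ x) := quad_proj Q' hQ't hQ'Q' x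
      have e2 : x ⬝ᵥ ((Q' * B * Q') *ᵥ x) = (Q' *ᵥ x) ⬝ᵥ (B *ᵥ (Q' *ᵥ x)) := by
        rw [← Matrix.mulVec_mulVec, ← Matrix.mulVec_mulVec, Matrix.dotProduct_mulVec,
          ← Matrix.mulVec_transpose, hQ't]
      rw [Matrix.sub_mulVec, dotProduct_sub, Matrix.smul_mulVec,
        dotProduct_smul, e1, e2]
      simpa [smul_eq_mul] using sub_nonneg.mpr hlead
  have h0 := trace_mul_psd_nonneg hPt hPP hXpsd
  have htrPQ' : (P * Q').trace = (m : ℝ) - ∑ j, p j := by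
    rw [hQ', Matrix.mul_sub, Matrix.mul_one, Matrix.trace_sub, htr, htrPQ]
  have hterm2 : (P * (Q' * B * Q')).trace ≤ μ j0 * ((m : ℝ) - ∑ j, p j) := by
    have hexp : P * (μ j0 • Q' - Q' * B * Q') =
        μ j0 • (P * Q') - P * (Q' * B * Q') := by
      rw [Matrix.mul_sub, Matrix.mul_smul]
    rw [hexp, Matrix.trace_sub, Matrix.trace_smul, htrPQ', smul_eq_mul] at h0
    linarith
  have hsplit : (P * B).trace = (P * (Φ * D * Φᵀ)).trace + (P * (Q' * B * Q')).trace := by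
    conv_lhs => rw [hdecomp]
    rw [Matrix.mul_add, Matrix.trace_add]
  rw [hsplit, hterm1]
  have hmsum : (m : ℝ) = ∑ _j : Fin m, (1 : ℝ) := by simp
  have hfinal : ∑ j, p j * μ j + μ j0 * ((m : ℝ) - ∑ j, p j) ≤ ∑ j, μ j := by
    rw [hmsum, ← Finset.sum_sub_distrib, Finset.mul_sum, ← Finset.sum_add_distrib]
    refine Finset.sum_le_sum fun j _ => ?_
    have h1 := hp1 j
    have h2 := hp0 j
    have h3 := hj0 j (Finset.mem_univ j)
    nlinarith
  linarith [hterm2]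


lemma mul_empty_eq_zero {X : Matrix (Fin d) (Fin 0) ℝ} {Y : Matrix (Fin 0) (Fin d) ℝ} :
    X * Y = 0 := by
  ext i k
  simp [Matrix.mul_apply]

end OptInfoAux

open OptInfoAux

/-- The posterior covariance `Σ_m(S) = Σ₀ − Σ₀ Aᵀ S (Sᵀ A Σ₀ Aᵀ S)⁻¹ Sᵀ A Σ₀` of the
probabilistic linear solver with prior covariance `Σ₀` and search directions `S`. -/
noncomputable def postCov {d m : ℕ} (A Sigma0 : Matrix (Fin d) (Fin d) ℝ)
    (S : Matrix (Fin d) (Fin m) ℝ) : Matrix (Fin d) (Fin d) ℝ :=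
  Sigma0 - Sigma0 * Aᵀ * S * (Sᵀ * A * Sigma0 * Aᵀ * S)⁻¹ * Sᵀ * A * Sigma0

/-- **Proposition 5, core optimisation claim.** Let `M` and `Σ₀` be symmetric
positive definite, `Msq` a square root of `M` (`Msqᵀ Msq = M`), and let `Φ ∈ ℝ^{d×m}` have
orthonormal columns (`Φᵀ Φ = I`) that are eigenvectors of `B = Msq Σ₀ Msqᵀ` corresponding to
its `m` largest eigenvalues `μ₁,…,μ_m` (i.e. the Rayleigh quotient of `B` on the orthogonal
complement of the columns of `Φ` is at most each `μ_j`).  Then the search directions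
`S_opt = A⁻ᵀ Msqᵀ Φ` minimise `tr(Msq Σ_m(S) Msqᵀ)` over all `S ∈ ℝ^{d×m}` with linearly
independent columns. -/
theorem optimal_information
    (d m : ℕ) (hm : m ≤ d)
    (A : Matrix (Fin d) (Fin d) ℝ) (hA : IsUnit A)
    (Sigma0 : Matrix (Fin d) (Fin d) ℝ) (hSigma0 : Sigma0.PosDef)
    (M : Matrix (Fin d) (Fin d) ℝ) (hM : M.PosDef)
    (Msq : Matrix (Fin d) (Fin d) ℝ) (hMsq : Msqᵀ * Msq = M)
    (Φ : Matrix (Fin d) (Fin m) ℝ) (hΦ : Φᵀ * Φ = 1)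
    (μ : Fin m → ℝ)
    (hEig : ∀ j : Fin m,
      (Msq * Sigma0 * Msqᵀ) *ᵥ (fun i => Φ i j) = μ j • (fun i => Φ i j))
    (hLead : ∀ v : Fin d → ℝ, (∀ j : Fin m, (fun i => Φ i j) ⬝ᵥ v = 0) →
      ∀ j : Fin m, v ⬝ᵥ ((Msq * Sigma0 * Msqᵀ) *ᵥ v) ≤ μ j * (v ⬝ᵥ v))
    (Sopt : Matrix (Fin d) (Fin m) ℝ) (hSopt : Sopt = (A⁻¹)ᵀ * Msqᵀ * Φ) :
    ∀ S : Matrix (Fin d) (Fin m) ℝ,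
      LinearIndependent ℝ (fun j : Fin m => fun i : Fin d => S i j) →
      (Msq * postCov A Sigma0 Sopt * Msqᵀ).trace ≤
        (Msq * postCov A Sigma0 S * Msqᵀ).trace := by

  intro S hS
  -- trivial case `m = 0`
  rcases Nat.eq_zero_or_pos m with hm0 | hm0
  · subst hm0
    have hpc : ∀ T : Matrix (Fin d) (Fin 0) ℝ, postCov A Sigma0 T = Sigma0 := by
      intro T
      rw [postCov]
      rw [show Sigma0 * Aᵀ * T * (Tᵀ * A * Sigma0 * Aᵀ * T)⁻¹ * Tᵀ = 0 from mul_empty_eq_zero,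
        Matrix.zero_mul, Matrix.zero_mul, sub_zero]
    rw [hpc S, hpc Sopt]
  -- main case
  -- basic invertibility facts
  have hAdet : IsUnit A.det := (Matrix.isUnit_iff_isUnit_det A).mp hA
  have hAinv : A⁻¹ * A = 1 := Matrix.nonsing_inv_mul A hAdet
  have hMsqdet : IsUnit Msq.det := by
    have h1 : Msq.det * Msq.det = M.det := by
      rw [← hMsq, Matrix.det_mul, Matrix.det_transpose]
    have h2 : Msq.det ≠ 0 := by
      intro h
      rw [h, mul_zero] at h1
      exact hM.det_pos.ne' h1.symm
    exact h2.isUnit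
  have hMsqtdet : IsUnit (Msqᵀ).det := by rwa [Matrix.det_transpose]
  have hMsqt1 : Msqᵀ * (Msqᵀ)⁻¹ = 1 := Matrix.mul_nonsing_inv _ hMsqtdet
  have hMsqt1' : (Msqᵀ)⁻¹ * Msqᵀ = 1 := Matrix.nonsing_inv_mul _ hMsqtdet
  have hS0t : Sigma0ᵀ = Sigma0 := by
    have h := hSigma0.1
    rwa [Matrix.IsHermitian, Matrix.conjTranspose_eq_transpose_of_trivial] at h
  -- the central matrix B
  obtain ⟨B, hBdef⟩ : ∃ B : Matrix (Fin d) (Fin d) ℝ, B = Msq * Sigma0 * Msqᵀ := ⟨_, rfl⟩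
  rw [← hBdef] at hEig hLead
  have hBt : Bᵀ = B := by
    rw [hBdef, Matrix.transpose_mul, Matrix.transpose_mul, Matrix.transpose_transpose, hS0t,
      Matrix.mul_assoc]
  have hBquad : ∀ x : Fin d → ℝ, x ⬝ᵥ (B *ᵥ x) = (Msqᵀ *ᵥ x) ⬝ᵥ (Sigma0 *ᵥ (Msqᵀ *ᵥ x)) := by
    intro x
    rw [hBdef, ← Matrix.mulVec_mulVec, ← Matrix.mulVec_mulVec, Matrix.dotProduct_mulVec,
      ← Matrix.mulVec_transpose]
  have hB : B.PosDef := by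
    refine Matrix.PosDef.of_dotProduct_mulVec_pos ?_ ?_
    · show Bᴴ = B
      rw [Matrix.conjTranspose_eq_transpose_of_trivial, hBt]
    · intro x hx
      have hsx : star x = x := by simp
      rw [hsx, hBquad]
      have hMx : Msqᵀ *ᵥ x ≠ 0 := by
        intro h
        have hinj : Function.Injective (Msqᵀ).mulVec :=
          Matrix.mulVec_injective_iff_isUnit.mpr ((Matrix.isUnit_iff_isUnit_det _).mpr hMsqtdet)
        exact hx (hinj (by rw [h, Matrix.mulVec_zero]))
      have := hSigma0.dotProduct_mulVec_pos hMx
      simpa using this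
  -- eigencolumn relation in matrix form
  have hBΦ : B * Φ = Φ * Matrix.diagonal μ := by
    ext i j
    have h := congrFun (hEig j) i
    simp only [Matrix.mulVec, dotProduct, Pi.smul_apply, smul_eq_mul] at h
    rw [Matrix.mul_diagonal, Matrix.mul_apply, h]
    ring
  -- positivity of the eigenvalues
  have hcol : ∀ j : Fin m, (fun i => Φ i j) ⬝ᵥ (fun i => Φ i j) = 1 := by
    intro j
    have h := congrFun (congrFun hΦ j) j
    simpa [Matrix.mul_apply, dotProduct, Matrix.one_apply] using h
  have hμpos : ∀ j, 0 < μ j := by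
    intro j
    have hc0 : (fun i => Φ i j) ≠ 0 := by
      intro h
      have := hcol j
      rw [h] at this
      simpa using this
    have h2 := hB.dotProduct_mulVec_pos hc0
    have hsx : star (fun i => Φ i j) = (fun i => Φ i j) := by simp
    rw [hsx, hEig j, dotProduct_smul, hcol j, smul_eq_mul, mul_one] at h2
    exact h2
  -- ===== the optimal value =====
  have hDdet : IsUnit (Matrix.diagonal μ).det := by
    rw [Matrix.det_diagonal]
    exact (Finset.prod_ne_zero_iff.mpr fun j _ => (hμpos j).ne').isUnit
  have hDinv : Matrix.diagonal μ * (Matrix.diagonal μ)⁻¹ = 1 :=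
    Matrix.mul_nonsing_inv _ hDdet
  have e1opt : Aᵀ * Sopt = Msqᵀ * Φ := by
    rw [hSopt, ← Matrix.mul_assoc, ← Matrix.mul_assoc, ← Matrix.transpose_mul, hAinv,
      Matrix.transpose_one, Matrix.one_mul]
  have e2opt : Soptᵀ * A = Φᵀ * Msq := by
    have h : (Aᵀ * Sopt)ᵀ = (Msqᵀ * Φ)ᵀ := by rw [e1opt]
    rwa [Matrix.transpose_mul, Matrix.transpose_mul, Matrix.transpose_transpose,
      Matrix.transpose_transpose] at h
  have hΦB : Φᵀ * B = Matrix.diagonal μ * Φᵀ := by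
    have h : (B * Φ)ᵀ = (Φ * Matrix.diagonal μ)ᵀ := by rw [hBΦ]
    rwa [Matrix.transpose_mul, Matrix.transpose_mul, hBt, Matrix.diagonal_transpose] at h
  have e3opt : Msq * Sigma0 * Aᵀ * Sopt = Φ * Matrix.diagonal μ := by
    rw [Matrix.mul_assoc (Msq * Sigma0), e1opt, ← Matrix.mul_assoc, ← hBdef, hBΦ]
  have e4opt : Soptᵀ * A * Sigma0 * Msqᵀ = Matrix.diagonal μ * Φᵀ := by
    rw [e2opt, Matrix.mul_assoc, Matrix.mul_assoc, ← Matrix.mul_assoc Msq, ← hBdef, hΦB]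
  have e5opt : Soptᵀ * A * Sigma0 * Aᵀ * Sopt = Matrix.diagonal μ := by
    rw [Matrix.mul_assoc (Soptᵀ * A * Sigma0), e1opt, ← Matrix.mul_assoc, e4opt,
      Matrix.mul_assoc, hΦ, Matrix.mul_one]
  have hoptval : Msq * postCov A Sigma0 Sopt * Msqᵀ = B - Φ * Matrix.diagonal μ * Φᵀ := by
    rw [postCov, Matrix.mul_sub, Matrix.sub_mul, e5opt, ← hBdef]
    congr 1
    have hassoc : Msq * (Sigma0 * Aᵀ * Sopt * (Matrix.diagonal μ)⁻¹ * Soptᵀ * A * Sigma0) * Msqᵀ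
        = (Msq * Sigma0 * Aᵀ * Sopt) * (Matrix.diagonal μ)⁻¹ * (Soptᵀ * A * Sigma0 * Msqᵀ) := by
      simp only [Matrix.mul_assoc]
    rw [hassoc, e3opt, e4opt, Matrix.mul_assoc Φ, hDinv, Matrix.mul_one, ← Matrix.mul_assoc]
  have hopttrace : (Msq * postCov A Sigma0 Sopt * Msqᵀ).trace = B.trace - ∑ j, μ j := by
    rw [hoptval, Matrix.trace_sub, Matrix.trace_mul_comm (Φ * Matrix.diagonal μ) Φᵀ,
      ← Matrix.mul_assoc, hΦ, Matrix.one_mul, Matrix.trace_diagonal]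
  -- ===== the general lower bound =====
  -- injectivity from the independent columns
  have hSv : ∀ x : Fin m → ℝ, S *ᵥ x = 0 → x = 0 := by
    intro x hx
    funext j
    refine Fintype.linearIndependent_iff.mp hS x ?_ j
    funext i
    have h := congrFun hx i
    simp only [Matrix.mulVec, dotProduct, Pi.zero_apply] at h ⊢
    rw [Finset.sum_apply]
    simp only [Pi.smul_apply, smul_eq_mul]
    rw [← h]
    exact Finset.sum_congr rfl fun k _ => mul_comm _ _
  obtain ⟨N, hN⟩ : ∃ N : Matrix (Fin d) (Fin m) ℝ, N = (Msqᵀ)⁻¹ * (Aᵀ * S) := ⟨_, rfl⟩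
  have hNt : Nᵀ = Sᵀ * A * Msq⁻¹ := by
    rw [hN, Matrix.transpose_mul, Matrix.transpose_mul, Matrix.transpose_transpose,
      Matrix.transpose_nonsing_inv, Matrix.transpose_transpose, Matrix.mul_assoc]
  have hMsqN : Msqᵀ * N = Aᵀ * S := by
    rw [hN, ← Matrix.mul_assoc, hMsqt1, Matrix.one_mul]
  have e3 : Msq * Sigma0 * Aᵀ * S = B * N := by
    rw [hBdef]
    calc Msq * Sigma0 * Aᵀ * S = Msq * Sigma0 * (Msqᵀ * N) := by
          rw [hMsqN, Matrix.mul_assoc]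
    _ = Msq * Sigma0 * Msqᵀ * N := by rw [Matrix.mul_assoc (Msq * Sigma0)]
  have e4 : Sᵀ * A * Sigma0 * Msqᵀ = Nᵀ * B := by
    have h : (Msq * Sigma0 * Aᵀ * S)ᵀ = (B * N)ᵀ := by rw [e3]
    simp only [Matrix.transpose_mul, Matrix.transpose_transpose] at h
    rw [hS0t, hBt] at h
    simp only [Matrix.mul_assoc]
    exact h
  have e5 : Sᵀ * A * Sigma0 * Aᵀ * S = Nᵀ * B * N := by
    rw [Matrix.mul_assoc (Sᵀ * A * Sigma0), ← hMsqN, ← Matrix.mul_assoc, e4, Matrix.mul_assoc]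
  obtain ⟨G, hG⟩ : ∃ G : Matrix (Fin m) (Fin m) ℝ, G = Nᵀ * B * N := ⟨_, rfl⟩
  have hNinj : ∀ x : Fin m → ℝ, x ≠ 0 → N *ᵥ x ≠ 0 := by
    intro x hx h
    rw [hN, ← Matrix.mulVec_mulVec, ← Matrix.mulVec_mulVec] at h
    have hinj1 : Function.Injective ((Msqᵀ)⁻¹).mulVec :=
      Matrix.mulVec_injective_iff_isUnit.mpr
        ((Matrix.isUnit_nonsing_inv_iff).mpr ((Matrix.isUnit_iff_isUnit_det _).mpr hMsqtdet))
    have h2 : Aᵀ *ᵥ (S *ᵥ x) = 0 := hinj1 (by rw [h, Matrix.mulVec_zero])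
    have hinj2 : Function.Injective (Aᵀ).mulVec :=
      Matrix.mulVec_injective_iff_isUnit.mpr
        ((Matrix.isUnit_iff_isUnit_det _).mpr (by rwa [Matrix.det_transpose]))
    have h3 : S *ᵥ x = 0 := hinj2 (by rw [h2, Matrix.mulVec_zero])
    exact hx (hSv x h3)
  have hGpd : G.PosDef := by
    rw [hG]
    refine Matrix.PosDef.of_dotProduct_mulVec_pos ?_ ?_
    · show (Nᵀ * B * N)ᴴ = _
      rw [Matrix.conjTranspose_eq_transpose_of_trivial, Matrix.transpose_mul,
        Matrix.transpose_mul, Matrix.transpose_transpose, hBt, Matrix.mul_assoc]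
    · intro x hx
      have hsx : star x = x := by simp
      have hq : x ⬝ᵥ ((Nᵀ * B * N) *ᵥ x) = (N *ᵥ x) ⬝ᵥ (B *ᵥ (N *ᵥ x)) := by
        rw [← Matrix.mulVec_mulVec, ← Matrix.mulVec_mulVec, Matrix.dotProduct_mulVec,
          ← Matrix.mulVec_transpose, Matrix.transpose_transpose]
      rw [hsx, hq]
      have := hB.dotProduct_mulVec_pos (hNinj x hx)
      simpa using this
  have hGdet : IsUnit G.det := (Matrix.isUnit_iff_isUnit_det _).mp hGpd.isUnit
  have hGinv : G * G⁻¹ = 1 := Matrix.mul_nonsing_inv _ hGdet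
  have hGinv' : G⁻¹ * G = 1 := Matrix.nonsing_inv_mul _ hGdet
  have hGt : Gᵀ = G := by
    rw [hG, Matrix.transpose_mul, Matrix.transpose_mul, Matrix.transpose_transpose, hBt,
      Matrix.mul_assoc]
  have hGinvt : (G⁻¹)ᵀ = G⁻¹ := by rw [Matrix.transpose_nonsing_inv, hGt]
  -- the square root of B
  obtain ⟨C, hCt, hCC⟩ : ∃ C : Matrix (Fin d) (Fin d) ℝ, Cᵀ = C ∧ C * C = B := by
    open scoped MatrixOrder in
    refine ⟨CFC.sqrt B, ?_, CFC.sqrt_mul_sqrt_self B (Matrix.nonneg_iff_posSemidef.mpr hB.posSemidef)⟩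
    open scoped MatrixOrder in
    have h := (Matrix.nonneg_iff_posSemidef.mp (CFC.sqrt_nonneg B)).1
    rwa [Matrix.IsHermitian, Matrix.conjTranspose_eq_transpose_of_trivial] at h
  obtain ⟨P, hP⟩ : ∃ P : Matrix (Fin d) (Fin d) ℝ, P = C * N * G⁻¹ * Nᵀ * C := ⟨_, rfl⟩
  have hPt : Pᵀ = P := by
    rw [hP]
    simp only [Matrix.transpose_mul, Matrix.transpose_transpose, hCt, hGinvt]
    simp only [Matrix.mul_assoc]
  have hPP : P * P = P := by
    rw [hP]
    simp only [Matrix.mul_assoc]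
    rw [← Matrix.mul_assoc C C, hCC, ← Matrix.mul_assoc Nᵀ B, ← Matrix.mul_assoc (Nᵀ * B),
      ← hG, ← Matrix.mul_assoc G⁻¹ G, hGinv', Matrix.one_mul]
  have htrP : P.trace = (m : ℝ) := by
    have h1 : P = (C * N * G⁻¹) * (Nᵀ * C) := by rw [hP]; simp only [Matrix.mul_assoc]
    rw [h1, Matrix.trace_mul_comm]
    have h2 : (Nᵀ * C) * (C * N * G⁻¹) = G * G⁻¹ := by
      simp only [Matrix.mul_assoc]
      rw [← Matrix.mul_assoc C C, hCC, ← Matrix.mul_assoc Nᵀ B, ← Matrix.mul_assoc (Nᵀ * B),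
        ← hG]
    rw [h2, hGinv, Matrix.trace_one]
    simp
  have hPBtr : (B * N * G⁻¹ * (Nᵀ * B)).trace = (P * B).trace := by
    have h1 : B * N * G⁻¹ * (Nᵀ * B) = C * (P * C) := by
      rw [hP]
      simp only [Matrix.mul_assoc]
      rw [← Matrix.mul_assoc C C, hCC]
    rw [h1, Matrix.trace_mul_comm C (P * C), Matrix.mul_assoc, ← hCC]
  have hSval : Msq * postCov A Sigma0 S * Msqᵀ = B - B * N * G⁻¹ * (Nᵀ * B) := by
    rw [postCov, Matrix.mul_sub, Matrix.sub_mul, e5, ← hG, ← hBdef]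
    congr 1
    have hassoc : Msq * (Sigma0 * Aᵀ * S * G⁻¹ * Sᵀ * A * Sigma0) * Msqᵀ
        = (Msq * Sigma0 * Aᵀ * S) * G⁻¹ * (Sᵀ * A * Sigma0 * Msqᵀ) := by
      simp only [Matrix.mul_assoc]
    rw [hassoc, e3, e4]
  -- apply the Ky Fan bound
  have hkf := kyfan hm0 B hB.posSemidef Φ hΦ μ hBΦ hLead P hPt hPP htrP
  rw [hopttrace, hSval, Matrix.trace_sub, hPBtr]
  linarith
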